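/- arXiv:2307.06552 — 2 statements merged into one kernel-verified Lean document; each statement's English description precedes it below -/
import Mathlib

section
/- Consistency of the LAGO GLM estimator (Theorem 1). In the two-stage LAGO setup, suppose that β* is a well-separated zero of the population estimating function u, i.e. for every ε > 0 one has inf{‖u(β)‖ : β ∈ B, ‖β − β*‖ ≥ ε} > 0 (this holds when there is enough variation in the intervention components), and let β̂_n : Ω → B be measurable random vectors satisfying U_n(β̂_n) = 0 almost surely for every n. Then β̂_n → β* in probability as n → ∞, i.e. for every δ > 0, ℙ(‖β̂_n − β*‖ > δ) → 0. -/
open MeasureTheory ProbabilityTheory Filter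
open scoped RealInnerProductSpace BigOperators NNReal Topology ENNReal

noncomputable section

/-- Concatenate `(1, a, z)` into a design vector in `ℝ^(1+P+Q)`. -/
def designVec {P Q : ℕ} (a : EuclideanSpace ℝ (Fin P)) (z : EuclideanSpace ℝ (Fin Q)) :
    EuclideanSpace ℝ (Fin (1 + P + Q)) :=
  (EuclideanSpace.equiv (Fin (1 + P + Q)) ℝ).symm
    (Fin.append (Fin.append ![(1 : ℝ)] ((EuclideanSpace.equiv (Fin P) ℝ) a))
      ((EuclideanSpace.equiv (Fin Q) ℝ) z))

/-- The two-stage LAGO setup. -/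
structure LagoSetup (Ω : Type) [MeasurableSpace Ω] (Pr : Measure Ω) (J1 J2 P Q : ℕ) where
  hJ1 : 1 ≤ J1
  hJ2 : 1 ≤ J2
  hP : 1 ≤ P
  hQ : 1 ≤ Q
  /-- stage-1 interventions -/
  a1 : Fin J1 → EuclideanSpace ℝ (Fin P)
  /-- stage-1 center covariates -/
  z1 : Fin J1 → EuclideanSpace ℝ (Fin Q)
  /-- limit stage-2 interventions -/
  a2 : Fin J2 → EuclideanSpace ℝ (Fin P)
  /-- stage-2 center covariates -/
  z2 : Fin J2 → EuclideanSpace ℝ (Fin Q)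
  /-- random stage-2 interventions, for each total sample size `n` -/
  A2 : ℕ → Fin J2 → Ω → EuclideanSpace ℝ (Fin P)
  measA2 : ∀ n j, Measurable (A2 n j)
  /-- per-center sample sizes, stage 1 -/
  n1 : ℕ → Fin J1 → ℕ
  /-- per-center sample sizes, stage 2 -/
  n2 : ℕ → Fin J2 → ℕ
  sum_sizes : ∀ n, (∑ j, n1 n j) + (∑ j, n2 n j) = n
  α1 : Fin J1 → ℝ
  α2 : Fin J2 → ℝ
  α1_pos : ∀ j, 0 < α1 j
  α2_pos : ∀ j, 0 < α2 j
  α1_lim : ∀ j, Tendsto (fun n : ℕ => (n1 n j : ℝ) / n) atTop (𝓝 (α1 j))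
  α2_lim : ∀ j, Tendsto (fun n : ℕ => (n2 n j : ℝ) / n) atTop (𝓝 (α2 j))
  /-- the mean function (inverse link) -/
  h : ℝ → ℝ
  h_smooth : ContDiff ℝ 2 h
  /-- the (compact) parameter space -/
  B : Set (EuclideanSpace ℝ (Fin (1 + P + Q)))
  B_compact : IsCompact B
  /-- the true parameter -/
  βstar : EuclideanSpace ℝ (Fin (1 + P + Q))
  βstar_mem : βstar ∈ B
  /-- stage-1 errors -/
  ε1 : Fin J1 → ℕ → Ω → ℝ
  /-- realized stage-2 errors -/
  ε2n : ℕ → Fin J2 → ℕ → Ω → ℝ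
  /-- coupled i.i.d. stage-2 error arrays -/
  ε2 : Fin J2 → ℕ → Ω → ℝ
  meas_ε1 : ∀ j i, Measurable (ε1 j i)
  meas_ε2n : ∀ n j i, Measurable (ε2n n j i)
  meas_ε2 : ∀ j i, Measurable (ε2 j i)
  /-- stage-1 error variances σ₁²(j) -/
  var1 : Fin J1 → ℝ
  /-- stage-2 error variances σ₂²(j) -/
  var2 : Fin J2 → ℝ
  /-- Assumption 3: convergence in probability of the stage-2 interventions -/
  A2_tendsto : ∀ j, TendstoInMeasure Pr (fun n => A2 n j) atTop (fun _ => a2 j)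
  /-- Assumption 4: all interventions and errors take values in one compact set -/
  bound : ℝ
  A2_bdd : ∀ n j ω, ‖A2 n j ω‖ ≤ bound
  ε1_bdd : ∀ j i ω, |ε1 j i ω| ≤ bound
  ε2n_bdd : ∀ n j i ω, |ε2n n j i ω| ≤ bound
  ε2_bdd : ∀ j i ω, |ε2 j i ω| ≤ bound
  /-- identical distribution within each error array -/
  ε1_ident : ∀ j i, IdentDistrib (ε1 j i) (ε1 j 0) Pr Pr
  ε2_ident : ∀ j i, IdentDistrib (ε2 j i) (ε2 j 0) Pr Pr
  ε1_mean : ∀ j i, ∫ ω, ε1 j i ω ∂Pr = 0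
  ε2_mean : ∀ j i, ∫ ω, ε2 j i ω ∂Pr = 0
  ε1_var : ∀ j i, ∫ ω, (ε1 j i ω) ^ 2 ∂Pr = var1 j
  ε2_var : ∀ j i, ∫ ω, (ε2 j i ω) ^ 2 ∂Pr = var2 j
  /-- all ε¹ and ε² variables are mutually independent -/
  ε_indep : iIndepFun
      (Sum.elim (fun p : Fin J1 × ℕ => fun ω => ε1 p.1 p.2 ω)
        (fun p : Fin J2 × ℕ => fun ω => ε2 p.1 p.2 ω)) Pr
  /-- the coupled ε² arrays are independent of (ε¹, (A_j^{(2,n)})_{j,n}) -/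
  ε2_indep_rest : IndepFun
      (fun ω => (fun p : Fin J2 × ℕ => ε2 p.1 p.2 ω))
      (fun ω => ((fun p : Fin J1 × ℕ => ε1 p.1 p.2 ω),
        (fun q : ℕ × Fin J2 => A2 q.1 q.2 ω))) Pr
  /-- Assumption 5: joint-law equality between realized and coupled errors -/
  jointLaw : ∀ n,
    Measure.map (fun ω => ((fun p : Fin J1 × ℕ => ε1 p.1 p.2 ω),
        (fun j => A2 n j ω), (fun p : Fin J2 × ℕ => ε2n n p.1 p.2 ω))) Pr
    = Measure.map (fun ω => ((fun p : Fin J1 × ℕ => ε1 p.1 p.2 ω),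
        (fun j => A2 n j ω), (fun p : Fin J2 × ℕ => ε2 p.1 p.2 ω))) Pr

namespace LagoSetup

variable {Ω : Type} [MeasurableSpace Ω] {Pr : Measure Ω} {J1 J2 P Q : ℕ}

/-- stage-1 design vectors x_j^{(1)} = (1, a_j^{(1)}, z_j^{(1)}) -/
def x1v (S : LagoSetup Ω Pr J1 J2 P Q) (j : Fin J1) : EuclideanSpace ℝ (Fin (1 + P + Q)) :=
  designVec (S.a1 j) (S.z1 j)

/-- limit stage-2 design vectors x_j^{(2)} = (1, a_j^{(2)}, z_j^{(2)}) -/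
def x2v (S : LagoSetup Ω Pr J1 J2 P Q) (j : Fin J2) : EuclideanSpace ℝ (Fin (1 + P + Q)) :=
  designVec (S.a2 j) (S.z2 j)

/-- random stage-2 design vectors X_j^{(2,n)} = (1, A_j^{(2,n)}, z_j^{(2)}) -/
def X2v (S : LagoSetup Ω Pr J1 J2 P Q) (n : ℕ) (j : Fin J2) (ω : Ω) :
    EuclideanSpace ℝ (Fin (1 + P + Q)) :=
  designVec (S.A2 n j ω) (S.z2 j)

/-- The LAGO estimating function U_n(β). -/
def U (S : LagoSetup Ω Pr J1 J2 P Q) (n : ℕ) (β : EuclideanSpace ℝ (Fin (1 + P + Q))) (ω : Ω) :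
    EuclideanSpace ℝ (Fin (1 + P + Q)) :=
  (n : ℝ)⁻¹ •
    ((∑ j, ∑ i ∈ Finset.range (S.n1 n j),
        (deriv S.h ⟪β, S.x1v j⟫ *
          (S.h ⟪S.βstar, S.x1v j⟫ + S.ε1 j i ω - S.h ⟪β, S.x1v j⟫)) • S.x1v j) +
      (∑ j, ∑ i ∈ Finset.range (S.n2 n j),
        (deriv S.h ⟪β, S.X2v n j ω⟫ *
          (S.h ⟪S.βstar, S.X2v n j ω⟫ + S.ε2n n j i ω - S.h ⟪β, S.X2v n j ω⟫)) •
          S.X2v n j ω))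

/-- The deterministic limit u(β) of the estimating function. -/
def uLim (S : LagoSetup Ω Pr J1 J2 P Q) (β : EuclideanSpace ℝ (Fin (1 + P + Q))) :
    EuclideanSpace ℝ (Fin (1 + P + Q)) :=
  (∑ j, (S.α1 j * deriv S.h ⟪β, S.x1v j⟫ *
      (S.h ⟪S.βstar, S.x1v j⟫ - S.h ⟪β, S.x1v j⟫)) • S.x1v j) +
    (∑ j, (S.α2 j * deriv S.h ⟪β, S.x2v j⟫ *
      (S.h ⟪S.βstar, S.x2v j⟫ - S.h ⟪β, S.x2v j⟫)) • S.x2v j)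

/-- The limiting Jacobian matrix J(β*). -/
def Jmat (S : LagoSetup Ω Pr J1 J2 P Q) : Matrix (Fin (1 + P + Q)) (Fin (1 + P + Q)) ℝ :=
  Matrix.of fun p q =>
    (∑ j, S.α1 j * (deriv S.h ⟪S.βstar, S.x1v j⟫) ^ 2 * (S.x1v j p * S.x1v j q)) +
      (∑ j, S.α2 j * (deriv S.h ⟪S.βstar, S.x2v j⟫) ^ 2 * (S.x2v j p * S.x2v j q))

/-- The limiting score covariance matrix V(β*). -/
def Vmat (S : LagoSetup Ω Pr J1 J2 P Q) : Matrix (Fin (1 + P + Q)) (Fin (1 + P + Q)) ℝ :=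
  Matrix.of fun p q =>
    (∑ j, S.α1 j * S.var1 j * (deriv S.h ⟪S.βstar, S.x1v j⟫) ^ 2 * (S.x1v j p * S.x1v j q)) +
      (∑ j, S.α2 j * S.var2 j * (deriv S.h ⟪S.βstar, S.x2v j⟫) ^ 2 * (S.x2v j p * S.x2v j q))

end LagoSetup

lemma continuous_designVec {P Q : ℕ} (z : EuclideanSpace ℝ (Fin Q)) :
    Continuous fun a : EuclideanSpace ℝ (Fin P) => designVec a z := by
  unfold designVec
  apply (Continuous.comp (EuclideanSpace.equiv (Fin (1 + P + Q)) ℝ).symm.continuous)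
  apply continuous_pi
  intro i
  refine Fin.addCases (fun i => ?_) (fun i => ?_) i
  · simp only [Fin.append_left]
    refine Fin.addCases (fun i => ?_) (fun i => ?_) i
    · simp only [Fin.append_left]; exact continuous_const
    · simp only [Fin.append_right]
      exact (continuous_apply i).comp (EuclideanSpace.equiv (Fin P) ℝ).continuous
  · simp only [Fin.append_right]
    exact continuous_const

lemma sum_inner_split {V : Type*} [AddCommGroup V] [Module ℝ V]
    (m : ℕ) (A C D : ℝ) (e : ℕ → ℝ) (v : V) :
    ∑ i ∈ Finset.range m, (A * (C + e i - D)) • v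
      = ((m : ℝ) * (A * (C - D))) • v + (∑ i ∈ Finset.range m, e i) • A • v := by
  rw [← Finset.sum_smul]
  have hs : ∑ i ∈ Finset.range m, (A * (C + e i - D))
      = (m : ℝ) * (A * (C - D)) + (∑ i ∈ Finset.range m, e i) * A := by
    simp_rw [show ∀ x : ℝ, A * (C + x - D) = A * (C - D) + x * A from fun x => by ring,
      Finset.sum_add_distrib, Finset.sum_const, Finset.card_range, nsmul_eq_mul,
      ← Finset.sum_mul]
  rw [hs, add_smul, smul_smul]
lemma cheb_tendsto {Ω : Type} [MeasurableSpace Ω] {Pr : Measure Ω} [IsProbabilityMeasure Pr]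
    {e : ℕ → Ω → ℝ} {K : ℝ}
    (hmem : ∀ i, MemLp (e i) 2 Pr) (hmean : ∀ i, ∫ ω, e i ω ∂Pr = 0)
    (hvar : ∀ i, variance (e i) Pr ≤ K)
    (hind : Pairwise fun i k => IndepFun (e i) (e k) Pr)
    (m : ℕ → ℕ) (hm : ∀ n, m n ≤ n) {t : ℝ} (ht : 0 < t) :
    Tendsto (fun n => Pr {ω | t ≤ |∑ i ∈ Finset.range (m n), e i ω| / n}) atTop (𝓝 0) := by
  have hK : 0 ≤ K := le_trans (variance_nonneg _ _) (hvar 0)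
  have key : ∀ n : ℕ, 1 ≤ n → Pr {ω | t ≤ |∑ i ∈ Finset.range (m n), e i ω| / n}
      ≤ ENNReal.ofReal (K / (t ^ 2 * n)) := by
    intro n hn
    have hn0 : (0 : ℝ) < n := by exact_mod_cast hn
    set X : Ω → ℝ := ∑ i ∈ Finset.range (m n), e i with hX
    have hXapp : ∀ ω, X ω = ∑ i ∈ Finset.range (m n), e i ω := fun ω => by
      simp [hX, Finset.sum_apply]
    have hXmem : MemLp X 2 Pr := memLp_finset_sum' _ (fun i _ => hmem i)
    have hXmean : ∫ ω, X ω ∂Pr = 0 := by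
      have : ∫ ω, (∑ i ∈ Finset.range (m n), e i ω) ∂Pr
          = ∑ i ∈ Finset.range (m n), ∫ ω, e i ω ∂Pr :=
        integral_finset_sum _ (fun i _ => (hmem i).integrable one_le_two)
      simp only [hXapp]
      simp [this, hmean]
    have hXvar : variance X Pr ≤ (n : ℝ) * K := by
      rw [hX, IndepFun.variance_sum (fun i _ => hmem i)
        (fun i _ k _ hik => hind hik)]
      calc ∑ i ∈ Finset.range (m n), variance (e i) Pr
          ≤ (Finset.range (m n)).card • K :=
            Finset.sum_le_card_nsmul _ _ _ (fun i _ => hvar i)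
        _ = (m n : ℝ) * K := by simp [nsmul_eq_mul]
        _ ≤ (n : ℝ) * K := by
            apply mul_le_mul_of_nonneg_right _ hK
            exact_mod_cast hm n
    have hcheb := meas_ge_le_variance_div_sq (μ := Pr) hXmem (c := t * n) (by positivity)
    refine le_trans (le_trans (measure_mono ?_) hcheb) ?_
    · intro ω hω
      simp only [Set.mem_setOf_eq] at hω ⊢
      rw [hXmean, sub_zero, ← hXapp] at *
      exact (le_div_iff₀ hn0).mp hω
    · apply ENNReal.ofReal_le_ofReal
      rw [div_le_div_iff₀ (by positivity) (by positivity)]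
      nlinarith [variance_nonneg X Pr, sq_nonneg t]
  have h2 : Tendsto (fun n : ℕ => ENNReal.ofReal (K / (t ^ 2 * n))) atTop (𝓝 0) := by
    rw [← ENNReal.ofReal_zero]
    apply ENNReal.tendsto_ofReal
    have h3 : Tendsto (fun n : ℕ => (K / t ^ 2) * (1 / n)) atTop (𝓝 0) := by
      simpa using tendsto_one_div_atTop_nhds_zero_nat.const_mul (K / t ^ 2)
    refine h3.congr fun n => ?_
    rw [div_mul_div_comm, mul_one]
  exact tendsto_of_tendsto_of_tendsto_of_le_of_le' tendsto_const_nhds h2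
    (Eventually.of_forall fun n => zero_le) ((eventually_ge_atTop 1).mono key)


namespace LagoSetup

variable {Ω : Type} [MeasurableSpace Ω] {Pr : Measure Ω} {J1 J2 P Q : ℕ}
variable (S : LagoSetup Ω Pr J1 J2 P Q)

/-- stage-1 deterministic summand -/
def F1 (j : Fin J1) (β : EuclideanSpace ℝ (Fin (1 + P + Q))) : EuclideanSpace ℝ (Fin (1 + P + Q)) :=
  (deriv S.h ⟪β, S.x1v j⟫ * (S.h ⟪S.βstar, S.x1v j⟫ - S.h ⟪β, S.x1v j⟫)) • S.x1v j

def F1e (j : Fin J1) (β : EuclideanSpace ℝ (Fin (1 + P + Q))) : EuclideanSpace ℝ (Fin (1 + P + Q)) :=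
  deriv S.h ⟪β, S.x1v j⟫ • S.x1v j

def G2 (j : Fin J2) (β : EuclideanSpace ℝ (Fin (1 + P + Q))) (a : EuclideanSpace ℝ (Fin P)) :
    EuclideanSpace ℝ (Fin (1 + P + Q)) :=
  (deriv S.h ⟪β, designVec a (S.z2 j)⟫ *
    (S.h ⟪S.βstar, designVec a (S.z2 j)⟫ - S.h ⟪β, designVec a (S.z2 j)⟫)) • designVec a (S.z2 j)

def G2e (j : Fin J2) (β : EuclideanSpace ℝ (Fin (1 + P + Q))) (a : EuclideanSpace ℝ (Fin P)) :
    EuclideanSpace ℝ (Fin (1 + P + Q)) :=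
  deriv S.h ⟪β, designVec a (S.z2 j)⟫ • designVec a (S.z2 j)

def E1sum (n : ℕ) (j : Fin J1) (ω : Ω) : ℝ := ∑ i ∈ Finset.range (S.n1 n j), S.ε1 j i ω
def E2sum (n : ℕ) (j : Fin J2) (ω : Ω) : ℝ := ∑ i ∈ Finset.range (S.n2 n j), S.ε2n n j i ω

lemma U_eq (n : ℕ) (β : EuclideanSpace ℝ (Fin (1 + P + Q))) (ω : Ω) :
    S.U n β ω
      = ((∑ j, ((S.n1 n j : ℝ) / n) • S.F1 j β) + (∑ j, (S.E1sum n j ω / n) • S.F1e j β))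
        + ((∑ j, ((S.n2 n j : ℝ) / n) • S.G2 j β (S.A2 n j ω))
          + (∑ j, (S.E2sum n j ω / n) • S.G2e j β (S.A2 n j ω))) := by
  unfold U
  simp only [X2v]
  have h1 : ∀ j : Fin J1,
      ∑ i ∈ Finset.range (S.n1 n j),
        (deriv S.h ⟪β, S.x1v j⟫ *
          (S.h ⟪S.βstar, S.x1v j⟫ + S.ε1 j i ω - S.h ⟪β, S.x1v j⟫)) • S.x1v j
      = ((S.n1 n j : ℝ) * (deriv S.h ⟪β, S.x1v j⟫ *
            (S.h ⟪S.βstar, S.x1v j⟫ - S.h ⟪β, S.x1v j⟫))) • S.x1v j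
        + S.E1sum n j ω • deriv S.h ⟪β, S.x1v j⟫ • S.x1v j := fun j =>
    sum_inner_split _ _ _ _ _ _
  have h2 : ∀ j : Fin J2,
      ∑ i ∈ Finset.range (S.n2 n j),
        (deriv S.h ⟪β, designVec (S.A2 n j ω) (S.z2 j)⟫ *
          (S.h ⟪S.βstar, designVec (S.A2 n j ω) (S.z2 j)⟫ + S.ε2n n j i ω - S.h ⟪β, designVec (S.A2 n j ω) (S.z2 j)⟫)) • designVec (S.A2 n j ω) (S.z2 j)
      = ((S.n2 n j : ℝ) * (deriv S.h ⟪β, designVec (S.A2 n j ω) (S.z2 j)⟫ *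
            (S.h ⟪S.βstar, designVec (S.A2 n j ω) (S.z2 j)⟫ - S.h ⟪β, designVec (S.A2 n j ω) (S.z2 j)⟫))) • designVec (S.A2 n j ω) (S.z2 j)
        + S.E2sum n j ω • deriv S.h ⟪β, designVec (S.A2 n j ω) (S.z2 j)⟫ • designVec (S.A2 n j ω) (S.z2 j) := fun j =>
    sum_inner_split _ _ _ _ _ _
  rw [Finset.sum_congr rfl fun j _ => h1 j, Finset.sum_congr rfl fun j _ => h2 j]
  rw [Finset.sum_add_distrib, Finset.sum_add_distrib]
  rw [smul_add, smul_add, smul_add, Finset.smul_sum, Finset.smul_sum, Finset.smul_sum,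
    Finset.smul_sum]
  have e1 : ∀ j : Fin J1, (n : ℝ)⁻¹ • (((S.n1 n j : ℝ) * (deriv S.h ⟪β, S.x1v j⟫ *
        (S.h ⟪S.βstar, S.x1v j⟫ - S.h ⟪β, S.x1v j⟫))) • S.x1v j)
      = ((S.n1 n j : ℝ) / n) • S.F1 j β := by
    intro j
    rw [F1, smul_smul, smul_smul]
    congr 1
    ring
  have e2 : ∀ j : Fin J1, (n : ℝ)⁻¹ • (S.E1sum n j ω • deriv S.h ⟪β, S.x1v j⟫ • S.x1v j)
      = (S.E1sum n j ω / n) • S.F1e j β := by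
    intro j
    rw [F1e, smul_smul, smul_smul, smul_smul]
    congr 1
    ring
  have e3 : ∀ j : Fin J2, (n : ℝ)⁻¹ • (((S.n2 n j : ℝ) * (deriv S.h ⟪β, designVec (S.A2 n j ω) (S.z2 j)⟫ *
        (S.h ⟪S.βstar, designVec (S.A2 n j ω) (S.z2 j)⟫ - S.h ⟪β, designVec (S.A2 n j ω) (S.z2 j)⟫))) • designVec (S.A2 n j ω) (S.z2 j))
      = ((S.n2 n j : ℝ) / n) • S.G2 j β (S.A2 n j ω) := by
    intro j
    rw [G2, smul_smul, smul_smul]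
    congr 1
    ring
  have e4 : ∀ j : Fin J2, (n : ℝ)⁻¹ • (S.E2sum n j ω • deriv S.h ⟪β, designVec (S.A2 n j ω) (S.z2 j)⟫ • designVec (S.A2 n j ω) (S.z2 j))
      = (S.E2sum n j ω / n) • S.G2e j β (S.A2 n j ω) := by
    intro j
    rw [G2e, smul_smul, smul_smul, smul_smul]
    congr 1
    ring
  rw [Finset.sum_congr rfl fun j _ => e1 j, Finset.sum_congr rfl fun j _ => e2 j,
    Finset.sum_congr rfl fun j _ => e3 j, Finset.sum_congr rfl fun j _ => e4 j]

lemma uLim_eq (β : EuclideanSpace ℝ (Fin (1 + P + Q))) :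
    S.uLim β = (∑ j, S.α1 j • S.F1 j β) + ∑ j, S.α2 j • S.G2 j β (S.a2 j) := by
  unfold uLim
  simp only [x2v]
  congr 1
  · refine Finset.sum_congr rfl fun j _ => ?_
    rw [F1, smul_smul]
    congr 1
    ring
  · refine Finset.sum_congr rfl fun j _ => ?_
    rw [G2, smul_smul]
    show _ • S.x2v j = _ • S.x2v j
    congr 1
    ring

end LagoSetup


namespace LagoSetup
variable {Ω : Type} [MeasurableSpace Ω] {Pr : Measure Ω} {J1 J2 P Q : ℕ}
variable (S : LagoSetup Ω Pr J1 J2 P Q)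

lemma diff_bound (n : ℕ) (β : EuclideanSpace ℝ (Fin (1 + P + Q))) (ω : Ω)
    (C1 C1e : Fin J1 → ℝ) (C2 C2e : Fin J2 → ℝ)
    (h1 : ∀ j, ‖S.F1 j β‖ ≤ C1 j) (h1e : ∀ j, ‖S.F1e j β‖ ≤ C1e j)
    (h2 : ∀ j, ‖S.G2 j β (S.a2 j)‖ ≤ C2 j) (h2e : ∀ j, ‖S.G2e j β (S.A2 n j ω)‖ ≤ C2e j) :
    ‖S.uLim β - S.U n β ω‖ ≤
      ((∑ j, |S.α1 j - (S.n1 n j : ℝ) / n| * C1 j)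
        + ∑ j, |S.α2 j - (S.n2 n j : ℝ) / n| * C2 j)
      + ((∑ j, (|S.E1sum n j ω| / n) * C1e j)
        + (∑ j, ((S.n2 n j : ℝ) / n) * ‖S.G2 j β (S.a2 j) - S.G2 j β (S.A2 n j ω)‖)
        + ∑ j, (|S.E2sum n j ω| / n) * C2e j) := by
  rw [uLim_eq, U_eq]
  have key : ((∑ j, S.α1 j • S.F1 j β) + ∑ j, S.α2 j • S.G2 j β (S.a2 j))
      - (((∑ j, ((S.n1 n j : ℝ) / n) • S.F1 j β) + (∑ j, (S.E1sum n j ω / n) • S.F1e j β))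
        + ((∑ j, ((S.n2 n j : ℝ) / n) • S.G2 j β (S.A2 n j ω))
          + (∑ j, (S.E2sum n j ω / n) • S.G2e j β (S.A2 n j ω))))
      = (∑ j, (S.α1 j - (S.n1 n j : ℝ) / n) • S.F1 j β)
        + (∑ j, ((S.α2 j - (S.n2 n j : ℝ) / n) • S.G2 j β (S.a2 j)
            + ((S.n2 n j : ℝ) / n) • (S.G2 j β (S.a2 j) - S.G2 j β (S.A2 n j ω))))
        + (-(∑ j, (S.E1sum n j ω / n) • S.F1e j β)
            + -(∑ j, (S.E2sum n j ω / n) • S.G2e j β (S.A2 n j ω))) := by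
    rw [Finset.sum_congr rfl fun (j : Fin J1) _ => sub_smul (S.α1 j) ((S.n1 n j : ℝ) / n) (S.F1 j β),
      Finset.sum_congr rfl fun (j : Fin J2) _ =>
        (by module :
          (S.α2 j - (S.n2 n j : ℝ) / n) • S.G2 j β (S.a2 j)
            + ((S.n2 n j : ℝ) / n) • (S.G2 j β (S.a2 j) - S.G2 j β (S.A2 n j ω))
          = S.α2 j • S.G2 j β (S.a2 j) - ((S.n2 n j : ℝ) / n) • S.G2 j β (S.A2 n j ω)),
      Finset.sum_sub_distrib, Finset.sum_sub_distrib]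
    abel
  rw [key]
  have b1 : ‖∑ j, (S.α1 j - (S.n1 n j : ℝ) / n) • S.F1 j β‖
      ≤ ∑ j, |S.α1 j - (S.n1 n j : ℝ) / n| * C1 j := by
    refine (norm_sum_le _ _).trans (Finset.sum_le_sum fun j _ => ?_)
    rw [norm_smul, Real.norm_eq_abs]
    exact mul_le_mul_of_nonneg_left (h1 j) (abs_nonneg _)
  have b2 : ‖∑ j, ((S.α2 j - (S.n2 n j : ℝ) / n) • S.G2 j β (S.a2 j)
        + ((S.n2 n j : ℝ) / n) • (S.G2 j β (S.a2 j) - S.G2 j β (S.A2 n j ω)))‖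
      ≤ (∑ j, |S.α2 j - (S.n2 n j : ℝ) / n| * C2 j)
        + ∑ j, ((S.n2 n j : ℝ) / n) * ‖S.G2 j β (S.a2 j) - S.G2 j β (S.A2 n j ω)‖ := by
    rw [← Finset.sum_add_distrib]
    refine (norm_sum_le _ _).trans (Finset.sum_le_sum fun j _ => ?_)
    refine (norm_add_le _ _).trans (add_le_add ?_ ?_)
    · rw [norm_smul, Real.norm_eq_abs]
      exact mul_le_mul_of_nonneg_left (h2 j) (abs_nonneg _)
    · rw [norm_smul, Real.norm_eq_abs, abs_of_nonneg (by positivity)]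
  have b3 : ‖∑ j, (S.E1sum n j ω / n) • S.F1e j β‖ ≤ ∑ j, (|S.E1sum n j ω| / n) * C1e j := by
    refine (norm_sum_le _ _).trans (Finset.sum_le_sum fun j _ => ?_)
    rw [norm_smul, Real.norm_eq_abs, abs_div, Nat.abs_cast]
    exact mul_le_mul_of_nonneg_left (h1e j) (by positivity)
  have b4 : ‖∑ j, (S.E2sum n j ω / n) • S.G2e j β (S.A2 n j ω)‖
      ≤ ∑ j, (|S.E2sum n j ω| / n) * C2e j := by
    refine (norm_sum_le _ _).trans (Finset.sum_le_sum fun j _ => ?_)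
    rw [norm_smul, Real.norm_eq_abs, abs_div, Nat.abs_cast]
    exact mul_le_mul_of_nonneg_left (h2e j) (by positivity)
  have b3' : ‖-(∑ j, (S.E1sum n j ω / n) • S.F1e j β)‖ ≤ ∑ j, (|S.E1sum n j ω| / n) * C1e j := by
    rw [norm_neg]; exact b3
  have b4' : ‖-(∑ j, (S.E2sum n j ω / n) • S.G2e j β (S.A2 n j ω))‖
      ≤ ∑ j, (|S.E2sum n j ω| / n) * C2e j := by
    rw [norm_neg]; exact b4
  refine le_trans (norm_add_le _ _) ?_
  refine le_trans (add_le_add ((norm_add_le _ _).trans (add_le_add b1 b2))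
    ((norm_add_le _ _).trans (add_le_add b3' b4'))) ?_
  linarith

end LagoSetup


namespace LagoSetup
variable {Ω : Type} [MeasurableSpace Ω] {Pr : Measure Ω} [IsProbabilityMeasure Pr]
  {J1 J2 P Q : ℕ} (S : LagoSetup Ω Pr J1 J2 P Q)

lemma memℒp_of_bdd {f : Ω → ℝ} (hf : Measurable f) {b : ℝ} (hb : ∀ ω, |f ω| ≤ b) :
    MemLp f 2 Pr :=
  (memLp_top_of_bound hf.aestronglyMeasurable b
    (Filter.Eventually.of_forall fun ω => by simpa [Real.norm_eq_abs] using hb ω)).mono_exponent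
    le_top

lemma variance_le_of_bdd {f : Ω → ℝ} (hm : MemLp f 2 Pr) (hmean : ∫ ω, f ω ∂Pr = 0)
    {b : ℝ} (hb : ∀ ω, |f ω| ≤ b) : variance f Pr ≤ b ^ 2 := by
  rw [variance_eq_sub hm]
  have h2 : ∫ ω, (f ω) ^ 2 ∂Pr ≤ b ^ 2 := by
    calc ∫ ω, (f ω) ^ 2 ∂Pr ≤ ∫ _ω, b ^ 2 ∂Pr := by
          refine integral_mono hm.integrable_sq (integrable_const _) fun ω => ?_
          have := abs_le.mp (hb ω)
          nlinarith [this.1, this.2]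
      _ = b ^ 2 := by simp
  simp only [Pi.pow_apply]
  have h3 : (∫ ω, f ω ∂Pr) ^ 2 = 0 := by rw [hmean]; ring
  rw [hmean]
  simpa using h2

lemma n1_le (n : ℕ) (j : Fin J1) : S.n1 n j ≤ n := by
  calc S.n1 n j ≤ ∑ j', S.n1 n j' := Finset.single_le_sum (fun _ _ => Nat.zero_le _)
        (Finset.mem_univ j)
    _ ≤ (∑ j', S.n1 n j') + ∑ j', S.n2 n j' := Nat.le_add_right _ _
    _ = n := S.sum_sizes n

lemma n2_le (n : ℕ) (j : Fin J2) : S.n2 n j ≤ n := by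
  calc S.n2 n j ≤ ∑ j', S.n2 n j' := Finset.single_le_sum (fun _ _ => Nat.zero_le _)
        (Finset.mem_univ j)
    _ ≤ (∑ j', S.n1 n j') + ∑ j', S.n2 n j' := Nat.le_add_left _ _
    _ = n := S.sum_sizes n

lemma tendsto_E1 (j : Fin J1) {t : ℝ} (ht : 0 < t) :
    Tendsto (fun n => Pr {ω | t ≤ |S.E1sum n j ω| / n}) atTop (𝓝 0) := by
  have hmem : ∀ i, MemLp (S.ε1 j i) 2 Pr := fun i =>
    memℒp_of_bdd (S.meas_ε1 j i) (S.ε1_bdd j i)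
  exact cheb_tendsto hmem (S.ε1_mean j)
    (fun i => variance_le_of_bdd (hmem i) (S.ε1_mean j i) (S.ε1_bdd j i))
    (fun i k hik => S.ε_indep.indepFun
      (show (Sum.inl (j, i) : (Fin J1 × ℕ) ⊕ (Fin J2 × ℕ)) ≠ Sum.inl (j, k) by simp [hik]))
    (fun n => S.n1 n j) (fun n => S.n1_le n j) ht

lemma tendsto_E2coupled (j : Fin J2) {t : ℝ} (ht : 0 < t) :
    Tendsto (fun n => Pr {ω | t ≤ |∑ i ∈ Finset.range (S.n2 n j), S.ε2 j i ω| / n})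
      atTop (𝓝 0) := by
  have hmem : ∀ i, MemLp (S.ε2 j i) 2 Pr := fun i =>
    memℒp_of_bdd (S.meas_ε2 j i) (S.ε2_bdd j i)
  exact cheb_tendsto hmem (S.ε2_mean j)
    (fun i => variance_le_of_bdd (hmem i) (S.ε2_mean j i) (S.ε2_bdd j i))
    (fun i k hik => S.ε_indep.indepFun
      (show (Sum.inr (j, i) : (Fin J1 × ℕ) ⊕ (Fin J2 × ℕ)) ≠ Sum.inr (j, k) by simp [hik]))
    (fun n => S.n2 n j) (fun n => S.n2_le n j) ht

lemma meas_E2sum_eq (n : ℕ) (j : Fin J2) {s : Set ℝ} (hs : MeasurableSet s) :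
    Pr {ω | S.E2sum n j ω ∈ s}
      = Pr {ω | (∑ i ∈ Finset.range (S.n2 n j), S.ε2 j i ω) ∈ s} := by
  have hT : Measurable (fun p : (Fin J1 × ℕ → ℝ) × (Fin J2 → EuclideanSpace ℝ (Fin P)) ×
        (Fin J2 × ℕ → ℝ) => ∑ i ∈ Finset.range (S.n2 n j), p.2.2 (j, i)) :=
    Finset.measurable_sum _ fun i _ =>
      (measurable_pi_apply _).comp (measurable_snd.comp measurable_snd)
  have hΦ : Measurable (fun ω => ((fun p : Fin J1 × ℕ => S.ε1 p.1 p.2 ω),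
      (fun j' => S.A2 n j' ω), (fun p : Fin J2 × ℕ => S.ε2n n p.1 p.2 ω))) :=
    Measurable.prod (measurable_pi_lambda _ fun p => S.meas_ε1 p.1 p.2)
      (Measurable.prod (measurable_pi_lambda _ fun j' => S.measA2 n j')
        (measurable_pi_lambda _ fun p => S.meas_ε2n n p.1 p.2))
  have hΨ : Measurable (fun ω => ((fun p : Fin J1 × ℕ => S.ε1 p.1 p.2 ω),
      (fun j' => S.A2 n j' ω), (fun p : Fin J2 × ℕ => S.ε2 p.1 p.2 ω))) :=
    Measurable.prod (measurable_pi_lambda _ fun p => S.meas_ε1 p.1 p.2)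
      (Measurable.prod (measurable_pi_lambda _ fun j' => S.measA2 n j')
        (measurable_pi_lambda _ fun p => S.meas_ε2 p.1 p.2))
  have h1 : Pr {ω | S.E2sum n j ω ∈ s}
      = Measure.map (fun ω => ((fun p : Fin J1 × ℕ => S.ε1 p.1 p.2 ω),
          (fun j' => S.A2 n j' ω), (fun p : Fin J2 × ℕ => S.ε2n n p.1 p.2 ω))) Pr
        ((fun p : (Fin J1 × ℕ → ℝ) × (Fin J2 → EuclideanSpace ℝ (Fin P)) ×
          (Fin J2 × ℕ → ℝ) => ∑ i ∈ Finset.range (S.n2 n j), p.2.2 (j, i)) ⁻¹' s) := by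
    rw [Measure.map_apply hΦ (hT hs)]
    rfl
  have h2 : Pr {ω | (∑ i ∈ Finset.range (S.n2 n j), S.ε2 j i ω) ∈ s}
      = Measure.map (fun ω => ((fun p : Fin J1 × ℕ => S.ε1 p.1 p.2 ω),
          (fun j' => S.A2 n j' ω), (fun p : Fin J2 × ℕ => S.ε2 p.1 p.2 ω))) Pr
        ((fun p : (Fin J1 × ℕ → ℝ) × (Fin J2 → EuclideanSpace ℝ (Fin P)) ×
          (Fin J2 × ℕ → ℝ) => ∑ i ∈ Finset.range (S.n2 n j), p.2.2 (j, i)) ⁻¹' s) := by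
    rw [Measure.map_apply hΨ (hT hs)]
    rfl
  rw [h1, h2, S.jointLaw n]

lemma tendsto_E2 (j : Fin J2) {t : ℝ} (ht : 0 < t) :
    Tendsto (fun n => Pr {ω | t ≤ |S.E2sum n j ω| / n}) atTop (𝓝 0) := by
  have heq : ∀ n : ℕ, Pr {ω | t ≤ |S.E2sum n j ω| / n}
      = Pr {ω | t ≤ |∑ i ∈ Finset.range (S.n2 n j), S.ε2 j i ω| / n} := by
    intro n
    have hs : MeasurableSet {r : ℝ | t ≤ |r| / (n : ℝ)} :=
      measurableSet_le measurable_const (measurable_id.abs.div_const _)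
    exact S.meas_E2sum_eq n j hs
  simp only [heq]
  exact S.tendsto_E2coupled j ht

end LagoSetup


namespace LagoSetup
variable {Ω : Type} [MeasurableSpace Ω] {Pr : Measure Ω} {J1 J2 P Q : ℕ}
variable (S : LagoSetup Ω Pr J1 J2 P Q)

lemma continuous_F1 (j : Fin J1) : Continuous (S.F1 j) := by
  have hd : Continuous (deriv S.h) := S.h_smooth.continuous_deriv one_le_two
  have hh : Continuous S.h := S.h_smooth.continuous
  have hin : Continuous fun β : EuclideanSpace ℝ (Fin (1 + P + Q)) => ⟪β, S.x1v j⟫ :=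
    continuous_id.inner continuous_const
  exact ((hd.comp hin).mul (continuous_const.sub (hh.comp hin))).smul continuous_const

lemma continuous_F1e (j : Fin J1) : Continuous (S.F1e j) := by
  have hd : Continuous (deriv S.h) := S.h_smooth.continuous_deriv one_le_two
  have hin : Continuous fun β : EuclideanSpace ℝ (Fin (1 + P + Q)) => ⟪β, S.x1v j⟫ :=
    continuous_id.inner continuous_const
  exact (hd.comp hin).smul continuous_const

lemma continuous_G2 (j : Fin J2) :
    Continuous fun p : EuclideanSpace ℝ (Fin (1 + P + Q)) × EuclideanSpace ℝ (Fin P) =>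
      S.G2 j p.1 p.2 := by
  have hd : Continuous (deriv S.h) := S.h_smooth.continuous_deriv one_le_two
  have hh : Continuous S.h := S.h_smooth.continuous
  have hx : Continuous fun p : EuclideanSpace ℝ (Fin (1 + P + Q)) × EuclideanSpace ℝ (Fin P) =>
      designVec p.2 (S.z2 j) := (continuous_designVec (S.z2 j)).comp continuous_snd
  have hin1 : Continuous fun p : EuclideanSpace ℝ (Fin (1 + P + Q)) × EuclideanSpace ℝ (Fin P) =>
      ⟪p.1, designVec p.2 (S.z2 j)⟫ := continuous_fst.inner hx
  have hin2 : Continuous fun p : EuclideanSpace ℝ (Fin (1 + P + Q)) × EuclideanSpace ℝ (Fin P) =>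
      ⟪S.βstar, designVec p.2 (S.z2 j)⟫ := continuous_const.inner hx
  exact ((hd.comp hin1).mul ((hh.comp hin2).sub (hh.comp hin1))).smul hx

lemma continuous_G2e (j : Fin J2) :
    Continuous fun p : EuclideanSpace ℝ (Fin (1 + P + Q)) × EuclideanSpace ℝ (Fin P) =>
      S.G2e j p.1 p.2 := by
  have hd : Continuous (deriv S.h) := S.h_smooth.continuous_deriv one_le_two
  have hx : Continuous fun p : EuclideanSpace ℝ (Fin (1 + P + Q)) × EuclideanSpace ℝ (Fin P) =>
      designVec p.2 (S.z2 j) := (continuous_designVec (S.z2 j)).comp continuous_snd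
  have hin1 : Continuous fun p : EuclideanSpace ℝ (Fin (1 + P + Q)) × EuclideanSpace ℝ (Fin P) =>
      ⟪p.1, designVec p.2 (S.z2 j)⟫ := continuous_fst.inner hx
  exact (hd.comp hin1).smul hx

end LagoSetup


/-- `μ` is the centered Gaussian law on ℝ^d with covariance matrix `C`
(characterized via all one-dimensional projections, Cramér–Wold). -/
def IsCenteredGaussianLaw {d : ℕ} (μ : Measure (EuclideanSpace ℝ (Fin d)))
    (C : Matrix (Fin d) (Fin d) ℝ) : Prop :=
  IsProbabilityMeasure μ ∧
    ∀ l : EuclideanSpace ℝ (Fin d),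
      Measure.map (fun v => ⟪l, v⟫) μ =
        gaussianReal 0 (Real.toNNReal (∑ p, ∑ q, l p * C p q * l q))

/-- Convergence in distribution: weak convergence of the laws. -/
def TendstoInDistribution {Ω : Type} [MeasurableSpace Ω] {E : Type*}
    [MeasurableSpace E] [TopologicalSpace E]
    (X : ℕ → Ω → E) (Pr : Measure Ω) (μ : Measure E) : Prop :=
  ∀ f : BoundedContinuousFunction E ℝ,
    Tendsto (fun n => ∫ ω, f (X n ω) ∂Pr) atTop (𝓝 (∫ x, f x ∂μ))

set_option maxHeartbeats 1600000

/-- **Theorem 1 (Consistency of the LAGO GLM estimator).**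
If β* is a well-separated zero of the population estimating function u, and β̂_n are
B-valued measurable random vectors solving U_n(β̂_n) = 0 a.s., then β̂_n → β* in probability. -/
theorem lago_consistency
    {Ω : Type} [MeasurableSpace Ω] {Pr : Measure Ω} [IsProbabilityMeasure Pr]
    {J1 J2 P Q : ℕ} (S : LagoSetup Ω Pr J1 J2 P Q)
    (hwellsep : ∀ ε > (0 : ℝ), ∃ c > (0 : ℝ),
      ∀ β ∈ S.B, ε ≤ ‖β - S.βstar‖ → c ≤ ‖S.uLim β‖)
    (βhat : ℕ → Ω → EuclideanSpace ℝ (Fin (1 + P + Q)))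
    (hβmeas : ∀ n, Measurable (βhat n))
    (hβmem : ∀ n ω, βhat n ω ∈ S.B)
    (hβzero : ∀ n, ∀ᵐ ω ∂Pr, S.U n (βhat n ω) ω = 0) :
    TendstoInMeasure Pr (fun n ω => βhat n ω) atTop (fun _ => S.βstar) := by
  rw [tendstoInMeasure_iff_dist]
  intro δ hδ
  obtain ⟨c, hc, hsep⟩ := hwellsep δ hδ
  classical
  -- bounding constants
  have hC1ex : ∀ j : Fin J1, ∃ C : ℝ, 1 ≤ C ∧ ∀ β ∈ S.B, ‖S.F1 j β‖ ≤ C := by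
    intro j
    obtain ⟨C, hC⟩ := S.B_compact.exists_bound_of_continuousOn (S.continuous_F1 j).continuousOn
    exact ⟨max C 1, le_max_right _ _, fun β hβ => (hC β hβ).trans (le_max_left _ _)⟩
  choose C1 hC1one hC1 using hC1ex
  have hC1eex : ∀ j : Fin J1, ∃ C : ℝ, 1 ≤ C ∧ ∀ β ∈ S.B, ‖S.F1e j β‖ ≤ C := by
    intro j
    obtain ⟨C, hC⟩ := S.B_compact.exists_bound_of_continuousOn (S.continuous_F1e j).continuousOn
    exact ⟨max C 1, le_max_right _ _, fun β hβ => (hC β hβ).trans (le_max_left _ _)⟩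
  choose C1e hC1eone hC1e using hC1eex
  have hC2ex : ∀ j : Fin J2, ∃ C : ℝ, 1 ≤ C ∧ ∀ β ∈ S.B, ‖S.G2 j β (S.a2 j)‖ ≤ C := by
    intro j
    have hcont : Continuous fun β : EuclideanSpace ℝ (Fin (1 + P + Q)) => S.G2 j β (S.a2 j) :=
      Continuous.comp (g := fun p : EuclideanSpace ℝ (Fin (1 + P + Q)) × EuclideanSpace ℝ (Fin P) =>
        S.G2 j p.1 p.2) (f := fun β => (β, S.a2 j)) (S.continuous_G2 j)
        (continuous_id.prodMk continuous_const)
    obtain ⟨C, hC⟩ := S.B_compact.exists_bound_of_continuousOn hcont.continuousOn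
    exact ⟨max C 1, le_max_right _ _, fun β hβ => (hC β hβ).trans (le_max_left _ _)⟩
  choose C2 hC2one hC2 using hC2ex
  have hC2eex : ∀ j : Fin J2, ∃ C : ℝ, 1 ≤ C ∧ ∀ β ∈ S.B,
      ∀ a : EuclideanSpace ℝ (Fin P), ‖a‖ ≤ S.bound → ‖S.G2e j β a‖ ≤ C := by
    intro j
    obtain ⟨C, hC⟩ := (S.B_compact.prod
        (isCompact_closedBall (0 : EuclideanSpace ℝ (Fin P)) S.bound)).exists_bound_of_continuousOn
      (S.continuous_G2e j).continuousOn
    refine ⟨max C 1, le_max_right _ _, fun β hβ a ha => ?_⟩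
    exact (hC (β, a) ⟨hβ, mem_closedBall_zero_iff.mpr ha⟩).trans (le_max_left _ _)
  choose C2e hC2eone hC2e using hC2eex
  -- the threshold
  have hmpos : 0 < J1 + 2 * J2 := by have := S.hJ1; omega
  set c2 : ℝ := c / (2 * (J1 + 2 * J2)) with hc2def
  have hc2 : 0 < c2 := by
    have h1 : (1 : ℝ) ≤ (J1 : ℝ) := by exact_mod_cast S.hJ1
    have h2 : (1 : ℝ) ≤ (J2 : ℝ) := by exact_mod_cast S.hJ2
    exact div_pos hc (by nlinarith)
  -- uniform continuity of G2 at the limit point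
  have hUCex : ∀ j : Fin J2, ∃ θ : ℝ, 0 < θ ∧ ∀ β ∈ S.B, ∀ a : EuclideanSpace ℝ (Fin P),
      ‖a‖ ≤ S.bound → dist (S.a2 j) a < θ →
        ‖S.G2 j β (S.a2 j) - S.G2 j β a‖ ≤ c2 / 2 := by
    intro j
    have hcomp : IsCompact (S.B ×ˢ insert (S.a2 j) (Metric.closedBall 0 S.bound)) :=
      S.B_compact.prod ((isCompact_closedBall _ _).insert _)
    have hUC' := hcomp.uniformContinuousOn_of_continuous (S.continuous_G2 j).continuousOn
    rw [Metric.uniformContinuousOn_iff] at hUC'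
    obtain ⟨θ, hθ, hθ'⟩ := hUC' (c2 / 2) (by positivity)
    refine ⟨θ, hθ, fun β hβ a ha hdlt => ?_⟩
    have h1 : (β, S.a2 j) ∈ S.B ×ˢ insert (S.a2 j) (Metric.closedBall 0 S.bound) :=
      ⟨hβ, Set.mem_insert _ _⟩
    have h2 : (β, a) ∈ S.B ×ˢ insert (S.a2 j) (Metric.closedBall 0 S.bound) :=
      ⟨hβ, Set.mem_insert_of_mem _ (mem_closedBall_zero_iff.mpr ha)⟩
    have hdd : dist (β, S.a2 j) (β, a) < θ := by
      rw [Prod.dist_eq, dist_self, sup_of_le_right dist_nonneg]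
      exact hdlt
    have := hθ' _ h1 _ h2 hdd
    rw [dist_eq_norm] at this
    exact this.le
  choose θ hθpos hθ using hUCex
  -- deterministic part tends to zero
  have hDet : Tendsto (fun n : ℕ => (∑ j, |S.α1 j - (S.n1 n j : ℝ) / n| * C1 j)
      + ∑ j, |S.α2 j - (S.n2 n j : ℝ) / n| * C2 j) atTop (𝓝 0) := by
    have t1 : ∀ j : Fin J1,
        Tendsto (fun n : ℕ => |S.α1 j - (S.n1 n j : ℝ) / n| * C1 j) atTop (𝓝 0) := by
      intro j
      have := (((tendsto_const_nhds (x := S.α1 j)).sub (S.α1_lim j)).abs).mul_const (C1 j)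
      simpa using this
    have t2 : ∀ j : Fin J2,
        Tendsto (fun n : ℕ => |S.α2 j - (S.n2 n j : ℝ) / n| * C2 j) atTop (𝓝 0) := by
      intro j
      have := (((tendsto_const_nhds (x := S.α2 j)).sub (S.α2_lim j)).abs).mul_const (C2 j)
      simpa using this
    have := (tendsto_finset_sum Finset.univ (fun j (_ : j ∈ Finset.univ) => t1 j)).add
      (tendsto_finset_sum Finset.univ (fun j (_ : j ∈ Finset.univ) => t2 j))
    simpa using this
  have hDev : ∀ᶠ n : ℕ in atTop, (∑ j, |S.α1 j - (S.n1 n j : ℝ) / n| * C1 j)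
      + (∑ j, |S.α2 j - (S.n2 n j : ℝ) / n| * C2 j) < c / 2 :=
    hDet.eventually_lt_const (by positivity)
  -- the dominating sequence of measures
  have hφ0 : Tendsto (fun n : ℕ =>
      ((∑ j : Fin J1, Pr {ω | c2 / C1e j ≤ |S.E1sum n j ω| / n})
        + ∑ j : Fin J2, Pr {ω | θ j ≤ dist (S.A2 n j ω) (S.a2 j)})
        + ∑ j : Fin J2, Pr {ω | c2 / C2e j ≤ |S.E2sum n j ω| / n}) atTop (𝓝 0) := by
    have l1 := tendsto_finset_sum (Finset.univ : Finset (Fin J1))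
      (fun j (_ : j ∈ Finset.univ) => S.tendsto_E1 j
        (div_pos hc2 (lt_of_lt_of_le one_pos (hC1eone j))))
    have l2 := tendsto_finset_sum (Finset.univ : Finset (Fin J2))
      (fun j (_ : j ∈ Finset.univ) => tendstoInMeasure_iff_dist.mp (S.A2_tendsto j) (θ j) (hθpos j))
    have l3 := tendsto_finset_sum (Finset.univ : Finset (Fin J2))
      (fun j (_ : j ∈ Finset.univ) => S.tendsto_E2 j
        (div_pos hc2 (lt_of_lt_of_le one_pos (hC2eone j))))
    have := (l1.add l2).add l3
    simpa using this
  refine tendsto_of_tendsto_of_tendsto_of_le_of_le' tendsto_const_nhds hφ0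
    (Eventually.of_forall fun n => zero_le) ?_
  filter_upwards [hDev, eventually_ge_atTop 1] with n hDn hn1
  have hsub : ({ω | δ ≤ dist (βhat n ω) S.βstar} : Set Ω) ≤ᵐ[Pr]
      ((⋃ j : Fin J1, {ω | c2 / C1e j ≤ |S.E1sum n j ω| / n})
        ∪ (⋃ j : Fin J2, {ω | θ j ≤ dist (S.A2 n j ω) (S.a2 j)})
        ∪ ⋃ j : Fin J2, {ω | c2 / C2e j ≤ |S.E2sum n j ω| / n} : Set Ω) := by
    filter_upwards [hβzero n] with ω hU hmemδ
    have hmemδ' : δ ≤ dist (βhat n ω) S.βstar := hmemδ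
    show ω ∈ ((⋃ j : Fin J1, {ω | c2 / C1e j ≤ |S.E1sum n j ω| / n})
        ∪ (⋃ j : Fin J2, {ω | θ j ≤ dist (S.A2 n j ω) (S.a2 j)})
        ∪ ⋃ j : Fin J2, {ω | c2 / C2e j ≤ |S.E2sum n j ω| / n})
    by_contra hnot
    simp only [Set.mem_union, Set.mem_iUnion, not_or, not_exists, Set.mem_setOf_eq,
      not_le] at hnot
    obtain ⟨⟨hn1b, hn2b⟩, hn3b⟩ := hnot
    have hβB := hβmem n ω
    have hnn : (0 : ℝ) < n := by exact_mod_cast hn1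
    have h0 : c ≤ ‖S.uLim (βhat n ω)‖ := by
      refine hsep _ hβB ?_
      rwa [dist_eq_norm] at hmemδ'
    have h1 : ‖S.uLim (βhat n ω)‖ = ‖S.uLim (βhat n ω) - S.U n (βhat n ω) ω‖ := by
      rw [hU, sub_zero]
    have h2 := S.diff_bound n (βhat n ω) ω C1 C1e C2 C2e
      (fun j => hC1 j _ hβB) (fun j => hC1e j _ hβB) (fun j => hC2 j _ hβB)
      (fun j => hC2e j _ hβB (S.A2 n j ω) (S.A2_bdd n j ω))
    have r1 : ∀ j : Fin J1, (|S.E1sum n j ω| / n) * C1e j ≤ c2 := by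
      intro j
      have hCpos : (0 : ℝ) < C1e j := lt_of_lt_of_le one_pos (hC1eone j)
      calc (|S.E1sum n j ω| / n) * C1e j ≤ (c2 / C1e j) * C1e j :=
            mul_le_mul_of_nonneg_right (hn1b j).le hCpos.le
        _ = c2 := div_mul_cancel₀ _ (ne_of_gt hCpos)
    have r3 : ∀ j : Fin J2, (|S.E2sum n j ω| / n) * C2e j ≤ c2 := by
      intro j
      have hCpos : (0 : ℝ) < C2e j := lt_of_lt_of_le one_pos (hC2eone j)
      calc (|S.E2sum n j ω| / n) * C2e j ≤ (c2 / C2e j) * C2e j :=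
            mul_le_mul_of_nonneg_right (hn3b j).le hCpos.le
        _ = c2 := div_mul_cancel₀ _ (ne_of_gt hCpos)
    have r2 : ∀ j : Fin J2, ((S.n2 n j : ℝ) / n) *
        ‖S.G2 j (βhat n ω) (S.a2 j) - S.G2 j (βhat n ω) (S.A2 n j ω)‖ ≤ c2 / 2 := by
      intro j
      have hgap : ‖S.G2 j (βhat n ω) (S.a2 j) - S.G2 j (βhat n ω) (S.A2 n j ω)‖ ≤ c2 / 2 :=
        hθ j _ hβB _ (S.A2_bdd n j ω) (by rw [dist_comm]; exact hn2b j)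
      have hfrac : (S.n2 n j : ℝ) / n ≤ 1 := by
        rw [div_le_one hnn]
        exact_mod_cast S.n2_le n j
      calc ((S.n2 n j : ℝ) / n) *
            ‖S.G2 j (βhat n ω) (S.a2 j) - S.G2 j (βhat n ω) (S.A2 n j ω)‖
          ≤ 1 * (c2 / 2) := mul_le_mul hfrac hgap (norm_nonneg _) one_pos.le
        _ = c2 / 2 := one_mul _
    have s1 : ∑ j, (|S.E1sum n j ω| / n) * C1e j ≤ (J1 : ℝ) * c2 := by
      calc ∑ j, (|S.E1sum n j ω| / n) * C1e j ≤ Finset.univ.card • c2 :=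
            Finset.sum_le_card_nsmul _ _ _ (fun j _ => r1 j)
        _ = (J1 : ℝ) * c2 := by simp [nsmul_eq_mul]
    have s2 : ∑ j, ((S.n2 n j : ℝ) / n) *
        ‖S.G2 j (βhat n ω) (S.a2 j) - S.G2 j (βhat n ω) (S.A2 n j ω)‖ ≤ (J2 : ℝ) * (c2 / 2) := by
      calc _ ≤ Finset.univ.card • (c2 / 2) :=
            Finset.sum_le_card_nsmul _ _ _ (fun j _ => r2 j)
        _ = (J2 : ℝ) * (c2 / 2) := by simp [nsmul_eq_mul]
    have s3 : ∑ j, (|S.E2sum n j ω| / n) * C2e j ≤ (J2 : ℝ) * c2 := by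
      calc ∑ j, (|S.E2sum n j ω| / n) * C2e j ≤ Finset.univ.card • c2 :=
            Finset.sum_le_card_nsmul _ _ _ (fun j _ => r3 j)
        _ = (J2 : ℝ) * c2 := by simp [nsmul_eq_mul]
    have hJ2 : (1 : ℝ) ≤ (J2 : ℝ) := by exact_mod_cast S.hJ2
    have hmc : ((J1 : ℝ) + 2 * (J2 : ℝ)) * c2 = c / 2 := by
      rw [hc2def]
      have : ((J1 : ℝ) + 2 * (J2 : ℝ)) = ((J1 + 2 * J2 : ℕ) : ℝ) := by push_cast; ring
      rw [this]
      field_simp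
    have hhalf : (J1 : ℝ) * c2 + ((J2 : ℝ) * (c2 / 2) + (J2 : ℝ) * c2) < c / 2 := by
      rw [← hmc]
      nlinarith [mul_le_mul_of_nonneg_right hJ2 hc2.le]
    linarith [h2, hDn]
  calc Pr {x | δ ≤ dist (βhat n x) S.βstar}
      ≤ Pr ((⋃ j : Fin J1, {ω | c2 / C1e j ≤ |S.E1sum n j ω| / n})
        ∪ (⋃ j : Fin J2, {ω | θ j ≤ dist (S.A2 n j ω) (S.a2 j)})
        ∪ ⋃ j : Fin J2, {ω | c2 / C2e j ≤ |S.E2sum n j ω| / n}) := measure_mono_ae hsub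
    _ ≤ ((∑ j : Fin J1, Pr {ω | c2 / C1e j ≤ |S.E1sum n j ω| / n})
        + ∑ j : Fin J2, Pr {ω | θ j ≤ dist (S.A2 n j ω) (S.a2 j)})
        + ∑ j : Fin J2, Pr {ω | c2 / C2e j ≤ |S.E2sum n j ω| / n} := by
        refine le_trans (measure_union_le _ _) ?_
        refine add_le_add (le_trans (measure_union_le _ _) ?_) (measure_iUnion_fintype_le _ _)
        exact add_le_add (measure_iUnion_fintype_le _ _) (measure_iUnion_fintype_le _ _)


end
end

section
/- Uniform vanishing of the stage-2 noise term (the G₂ claim). In the two-stage LAGO setup, sup_{β ∈ B} ‖ (1/n) Σ_{j≤J₂} Σ_{i≤n_j^{(2)}(n)} h′(⟨β, X_j^{(2,n)}⟩) X_j^{(2,n)} ε_{ij}^{(2,n)} ‖ → 0 in probability as n → ∞. -/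
open MeasureTheory ProbabilityTheory Filter
open scoped RealInnerProductSpace BigOperators NNReal Topology ENNReal

noncomputable section

section AuxLemmas

lemma eucl_norm_sq {n : ℕ} (x : EuclideanSpace ℝ (Fin n)) : ‖x‖ ^ 2 = ∑ i, (x i) ^ 2 := by
  rw [EuclideanSpace.norm_eq, Real.sq_sqrt (Finset.sum_nonneg fun i _ => sq_nonneg _)]
  simp [Real.norm_eq_abs, sq_abs]

lemma designVec_norm_le {P Q : ℕ} (a : EuclideanSpace ℝ (Fin P)) (z : EuclideanSpace ℝ (Fin Q)) :
    ‖designVec a z‖ ≤ 1 + ‖a‖ + ‖z‖ := by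
  have hsq : ‖designVec a z‖ ^ 2 = 1 + ‖a‖ ^ 2 + ‖z‖ ^ 2 := by
    rw [eucl_norm_sq, eucl_norm_sq, eucl_norm_sq]
    have h0 : ∀ i : Fin (1 + P + Q), (designVec a z) i =
        (Fin.append (Fin.append ![(1 : ℝ)] (fun k => a k)) (fun k => z k)) i := fun i => rfl
    simp_rw [h0]
    rw [Fin.sum_univ_add, Fin.sum_univ_add]
    simp [Fin.append_left, Fin.append_right]
  nlinarith [norm_nonneg (designVec a z), norm_nonneg a, norm_nonneg z, sq_nonneg (‖a‖ * ‖z‖),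
    mul_nonneg (norm_nonneg a) (norm_nonneg z)]

end AuxLemmas

/-- **Uniform vanishing of the stage-2 noise term (the G₂ claim):**
sup_{β ∈ B} ‖(1/n) Σ_{j≤J₂} Σ_{i≤n_j^{(2)}(n)} h′(⟨β, X_j^{(2,n)}⟩) X_j^{(2,n)} ε_{ij}^{(2,n)}‖ → 0
in probability. -/
theorem lago_stage2_noise_term
    {Ω : Type} [MeasurableSpace Ω] {Pr : Measure Ω} [IsProbabilityMeasure Pr]
    {J1 J2 P Q : ℕ} (S : LagoSetup Ω Pr J1 J2 P Q) :
    TendstoInMeasure Pr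
      (fun (n : ℕ) ω => sSup ((fun β =>
        ‖(n : ℝ)⁻¹ • ∑ j, ∑ i ∈ Finset.range (S.n2 n j),
          (deriv S.h ⟪β, S.X2v n j ω⟫ * S.ε2n n j i ω) • S.X2v n j ω‖) '' S.B))
      atTop (fun _ => (0 : ℝ)) := by
  classical
  obtain ⟨Cb, hCb⟩ : ∃ C, ∀ β ∈ S.B, ‖β‖ ≤ C :=
    isBounded_iff_forall_norm_le.mp S.B_compact.isBounded
  have hCz_nonneg : (0:ℝ) ≤ ∑ j, ‖S.z2 j‖ := Finset.sum_nonneg fun j _ => norm_nonneg _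
  have hz_le : ∀ j : Fin J2, ‖S.z2 j‖ ≤ ∑ j', ‖S.z2 j'‖ := fun j =>
    Finset.single_le_sum (f := fun j' => ‖S.z2 j'‖) (fun i _ => norm_nonneg _) (Finset.mem_univ j)
  set R : ℝ := 1 + |S.bound| + ∑ j, ‖S.z2 j‖ with hR
  have hR_nonneg : 0 ≤ R := by positivity
  have hX : ∀ n j ω, ‖S.X2v n j ω‖ ≤ R := by
    intro n j ω
    refine (designVec_norm_le _ _).trans ?_
    have h1 := S.A2_bdd n j ω
    have h2 := hz_le j
    have h3 := le_abs_self S.bound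
    rw [hR]; linarith
  set Cb' : ℝ := max Cb 0 with hCb'
  have hβ_le : ∀ β ∈ S.B, ‖β‖ ≤ Cb' := fun β hβ => (hCb β hβ).trans (le_max_left _ _)
  have hIcc : ∀ n j ω, ∀ β ∈ S.B, ⟪β, S.X2v n j ω⟫ ∈ Set.Icc (-(Cb' * R)) (Cb' * R) := by
    intro n j ω β hβ
    have h1 : |⟪β, S.X2v n j ω⟫| ≤ Cb' * R :=
      (abs_real_inner_le_norm _ _).trans
        (mul_le_mul (hβ_le β hβ) (hX n j ω) (norm_nonneg _) (le_max_right _ _))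
    exact abs_le.mp h1
  obtain ⟨D, hD⟩ := (isCompact_Icc (a := -(Cb' * R)) (b := Cb' * R)).exists_bound_of_continuousOn
    ((S.h_smooth.continuous_deriv (by norm_num)).continuousOn)
  have hderiv : ∀ n j ω, ∀ β ∈ S.B, |deriv S.h ⟪β, S.X2v n j ω⟫| ≤ |D| := by
    intro n j ω β hβ
    have := hD _ (hIcc n j ω β hβ)
    rw [Real.norm_eq_abs] at this
    exact this.trans (le_abs_self D)
  set M : ℝ := |D| * R + 1 with hM
  have hM_pos : 0 < M := by positivity
  set T : ℕ → Fin J2 → Ω → ℝ :=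
    fun n j ω => |(n:ℝ)⁻¹ * ∑ i ∈ Finset.range (S.n2 n j), S.ε2n n j i ω| with hT
  have hT_nonneg : ∀ n j ω, 0 ≤ T n j ω := fun _ _ _ => abs_nonneg _
  have key : ∀ (n : ℕ) (ω : Ω), ∀ β ∈ S.B,
      ‖(n : ℝ)⁻¹ • ∑ j, ∑ i ∈ Finset.range (S.n2 n j),
        (deriv S.h ⟪β, S.X2v n j ω⟫ * S.ε2n n j i ω) • S.X2v n j ω‖ ≤ M * ∑ j, T n j ω := by
    intro n ω β hβ
    rw [Finset.smul_sum]
    refine (norm_sum_le _ _).trans ?_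
    rw [Finset.mul_sum]
    refine Finset.sum_le_sum fun j _ => ?_
    have hv : (n : ℝ)⁻¹ • ∑ i ∈ Finset.range (S.n2 n j),
        (deriv S.h ⟪β, S.X2v n j ω⟫ * S.ε2n n j i ω) • S.X2v n j ω
        = ((n : ℝ)⁻¹ * (deriv S.h ⟪β, S.X2v n j ω⟫ *
            ∑ i ∈ Finset.range (S.n2 n j), S.ε2n n j i ω)) • S.X2v n j ω := by
      rw [← Finset.sum_smul, ← Finset.mul_sum, smul_smul]
    rw [hv, norm_smul, Real.norm_eq_abs]
    have h1 : |(n:ℝ)⁻¹ * (deriv S.h ⟪β, S.X2v n j ω⟫ *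
        ∑ i ∈ Finset.range (S.n2 n j), S.ε2n n j i ω)|
        = |deriv S.h ⟪β, S.X2v n j ω⟫| * T n j ω := by
      rw [hT]
      simp only [abs_mul]
      ring
    rw [h1]
    have h2 := hderiv n j ω β hβ
    have h3 := hX n j ω
    have h4 := hT_nonneg n j ω
    have h5 : (0:ℝ) ≤ |deriv S.h ⟪β, S.X2v n j ω⟫| := abs_nonneg _
    have h6 : (0:ℝ) ≤ ‖S.X2v n j ω‖ := norm_nonneg _
    have h7 : |deriv S.h ⟪β, S.X2v n j ω⟫| * ‖S.X2v n j ω‖ ≤ |D| * R :=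
      mul_le_mul h2 h3 h6 (abs_nonneg D)
    rw [hM]
    nlinarith [mul_le_mul_of_nonneg_right h7 h4]
  have hbdd : ∀ (n : ℕ) (ω : Ω), BddAbove ((fun β =>
      ‖(n : ℝ)⁻¹ • ∑ j, ∑ i ∈ Finset.range (S.n2 n j),
        (deriv S.h ⟪β, S.X2v n j ω⟫ * S.ε2n n j i ω) • S.X2v n j ω‖) '' S.B) := by
    intro n ω
    exact ⟨M * ∑ j, T n j ω, by rintro y ⟨β, hβ, rfl⟩; exact key n ω β hβ⟩
  have hsum_nonneg : ∀ (n : ℕ) (ω : Ω), 0 ≤ ∑ j, T n j ω :=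
    fun n ω => Finset.sum_nonneg fun j _ => hT_nonneg n j ω
  have hsup_le : ∀ (n : ℕ) (ω : Ω), sSup ((fun β =>
      ‖(n : ℝ)⁻¹ • ∑ j, ∑ i ∈ Finset.range (S.n2 n j),
        (deriv S.h ⟪β, S.X2v n j ω⟫ * S.ε2n n j i ω) • S.X2v n j ω‖) '' S.B)
      ≤ M * ∑ j, T n j ω := by
    intro n ω
    refine Real.sSup_le ?_ (mul_nonneg hM_pos.le (hsum_nonneg n ω))
    rintro y ⟨β, hβ, rfl⟩
    exact key n ω β hβ
  have hsup_nonneg : ∀ (n : ℕ) (ω : Ω), 0 ≤ sSup ((fun β =>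
      ‖(n : ℝ)⁻¹ • ∑ j, ∑ i ∈ Finset.range (S.n2 n j),
        (deriv S.h ⟪β, S.X2v n j ω⟫ * S.ε2n n j i ω) • S.X2v n j ω‖) '' S.B) := by
    intro n ω
    exact (norm_nonneg _).trans (le_csSup (hbdd n ω) ⟨S.βstar, S.βstar_mem, rfl⟩)
  rw [tendstoInMeasure_iff_dist]
  intro ε hε
  have hJ2pos : (0:ℝ) < J2 := by exact_mod_cast Nat.lt_of_lt_of_le Nat.zero_lt_one S.hJ2
  set δ : ℝ := ε / (M * J2) with hδ
  have hδpos : 0 < δ := div_pos hε (mul_pos hM_pos hJ2pos)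
  -- inclusion into the union of per-center tail events
  have hincl : ∀ n : ℕ, {ω | ε ≤ dist (sSup ((fun β =>
      ‖(n : ℝ)⁻¹ • ∑ j, ∑ i ∈ Finset.range (S.n2 n j),
        (deriv S.h ⟪β, S.X2v n j ω⟫ * S.ε2n n j i ω) • S.X2v n j ω‖) '' S.B)) 0}
      ⊆ ⋃ j : Fin J2, {ω | δ ≤ T n j ω} := by
    intro n ω hω
    simp only [Set.mem_setOf_eq, Real.dist_eq, sub_zero,
      abs_of_nonneg (hsup_nonneg n ω)] at hω
    by_contra hc
    simp only [Set.mem_iUnion, Set.mem_setOf_eq, not_exists, not_le] at hc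
    have h1 : ∑ j, T n j ω < ∑ _j : Fin J2, δ :=
      Finset.sum_lt_sum_of_nonempty (Finset.univ_nonempty_iff.mpr
        ⟨⟨0, Nat.lt_of_lt_of_le Nat.zero_lt_one S.hJ2⟩⟩) (fun j _ => hc j)
    have h2 : ∑ _j : Fin J2, δ = (J2:ℝ) * δ := by
      simp [Finset.sum_const, nsmul_eq_mul]
    have h3 : ε ≤ M * ∑ j, T n j ω := le_trans hω (hsup_le n ω)
    have h4 : M * ((J2:ℝ) * δ) = ε := by
      rw [hδ]; field_simp
    nlinarith [hsum_nonneg n ω]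
  -- per-center tail bound via the coupled errors and Chebyshev
  have tail : ∀ (j : Fin J2) (n : ℕ), 1 ≤ n →
      Pr {ω | δ ≤ T n j ω} ≤ ENNReal.ofReal (S.bound^2 / (δ^2 * n)) := by
    intro j n hn
    have hn0 : (0:ℝ) < n := by exact_mod_cast hn
    set m : ℕ := S.n2 n j with hm
    have hmn : m ≤ n := by
      have h1 := S.sum_sizes n
      have h2 : m ≤ ∑ j', S.n2 n j' :=
        Finset.single_le_sum (f := fun j' => S.n2 n j') (fun _ _ => Nat.zero_le _)
          (Finset.mem_univ j)
      omega
    -- transfer the law from ε2n to ε2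
    have hΦ_meas : Measurable (fun t : (Fin J1 × ℕ → ℝ) ×
        (Fin J2 → EuclideanSpace ℝ (Fin P)) × (Fin J2 × ℕ → ℝ) =>
        |(n:ℝ)⁻¹ * ∑ i ∈ Finset.range m, t.2.2 (j, i)|) := by
      apply Measurable.abs
      apply Measurable.const_mul
      apply Finset.measurable_sum
      intro i _
      exact (measurable_pi_apply (j, i)).comp (measurable_snd.comp measurable_snd)
    have hF_meas : Measurable (fun ω : Ω =>
        ((fun p : Fin J1 × ℕ => S.ε1 p.1 p.2 ω),
          (fun j' => S.A2 n j' ω), (fun p : Fin J2 × ℕ => S.ε2n n p.1 p.2 ω))) := by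
      refine Measurable.prodMk ?_ (Measurable.prodMk ?_ ?_)
      · exact measurable_pi_lambda _ fun p => S.meas_ε1 p.1 p.2
      · exact measurable_pi_lambda _ fun j' => S.measA2 n j'
      · exact measurable_pi_lambda _ fun p => S.meas_ε2n n p.1 p.2
    have hG_meas : Measurable (fun ω : Ω =>
        ((fun p : Fin J1 × ℕ => S.ε1 p.1 p.2 ω),
          (fun j' => S.A2 n j' ω), (fun p : Fin J2 × ℕ => S.ε2 p.1 p.2 ω))) := by
      refine Measurable.prodMk ?_ (Measurable.prodMk ?_ ?_)
      · exact measurable_pi_lambda _ fun p => S.meas_ε1 p.1 p.2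
      · exact measurable_pi_lambda _ fun j' => S.measA2 n j'
      · exact measurable_pi_lambda _ fun p => S.meas_ε2 p.1 p.2
    have hs_meas : MeasurableSet {x : ℝ | δ ≤ x} := measurableSet_Ici
    have hlaw : Pr {ω | δ ≤ T n j ω}
        = Pr {ω | δ ≤ |(n:ℝ)⁻¹ * ∑ i ∈ Finset.range m, S.ε2 j i ω|} := by
      have e1 : {ω | δ ≤ T n j ω} = (fun ω : Ω =>
          ((fun p : Fin J1 × ℕ => S.ε1 p.1 p.2 ω),
            (fun j' => S.A2 n j' ω), (fun p : Fin J2 × ℕ => S.ε2n n p.1 p.2 ω))) ⁻¹'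
          ((fun t : (Fin J1 × ℕ → ℝ) ×
            (Fin J2 → EuclideanSpace ℝ (Fin P)) × (Fin J2 × ℕ → ℝ) =>
            |(n:ℝ)⁻¹ * ∑ i ∈ Finset.range m, t.2.2 (j, i)|) ⁻¹' {x : ℝ | δ ≤ x}) := rfl
      have e2 : {ω | δ ≤ |(n:ℝ)⁻¹ * ∑ i ∈ Finset.range m, S.ε2 j i ω|} = (fun ω : Ω =>
          ((fun p : Fin J1 × ℕ => S.ε1 p.1 p.2 ω),
            (fun j' => S.A2 n j' ω), (fun p : Fin J2 × ℕ => S.ε2 p.1 p.2 ω))) ⁻¹'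
          ((fun t : (Fin J1 × ℕ → ℝ) ×
            (Fin J2 → EuclideanSpace ℝ (Fin P)) × (Fin J2 × ℕ → ℝ) =>
            |(n:ℝ)⁻¹ * ∑ i ∈ Finset.range m, t.2.2 (j, i)|) ⁻¹' {x : ℝ | δ ≤ x}) := rfl
      rw [e1, e2, ← Measure.map_apply hF_meas (hΦ_meas hs_meas),
        ← Measure.map_apply hG_meas (hΦ_meas hs_meas), S.jointLaw n]
    rw [hlaw]
    -- Chebyshev for the coupled errors
    have hℒ2 : ∀ i : ℕ, MemLp (S.ε2 j i) 2 Pr := fun i =>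
      MemLp.of_bound (S.meas_ε2 j i).aestronglyMeasurable |S.bound|
        (Filter.Eventually.of_forall fun ω => by
          rw [Real.norm_eq_abs]; exact (S.ε2_bdd j i ω).trans (le_abs_self _))
    have hSm2 : MemLp (∑ i ∈ Finset.range m, S.ε2 j i) 2 Pr :=
      memLp_finsetSum' _ (fun i _ => hℒ2 i)
    have hvar_le : ∀ i : ℕ, variance (S.ε2 j i) Pr ≤ S.bound^2 := by
      intro i
      rw [variance_eq_sub (hℒ2 i)]
      have h0 : Pr[S.ε2 j i] = 0 := S.ε2_mean j i
      have h1 : ∫ ω, (S.ε2 j i ω)^2 ∂Pr ≤ S.bound^2 := by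
        have hpt : ∀ ω, (S.ε2 j i ω)^2 ≤ S.bound^2 := fun ω => by
          have hb := abs_le.mp (S.ε2_bdd j i ω)
          nlinarith [hb.1, hb.2]
        calc ∫ ω, (S.ε2 j i ω)^2 ∂Pr ≤ ∫ _ω, S.bound^2 ∂Pr :=
              integral_mono ((hℒ2 i).integrable_sq) (integrable_const _) hpt
          _ = S.bound^2 := by simp
      rw [h0]
      have h2 : Pr[(S.ε2 j i)^2] = ∫ ω, (S.ε2 j i ω)^2 ∂Pr := rfl
      rw [h2]
      simpa using h1
    have hpair : Set.Pairwise ↑(Finset.range m)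
        (fun i i' => IndepFun (S.ε2 j i) (S.ε2 j i') Pr) := by
      intro i _ i' _ hii'
      exact S.ε_indep.indepFun
        (show (Sum.inr (j, i) : (Fin J1 × ℕ) ⊕ (Fin J2 × ℕ)) ≠ Sum.inr (j, i') by
          simp [hii'])
    have hvarSm : variance (∑ i ∈ Finset.range m, S.ε2 j i) Pr ≤ (m:ℝ) * S.bound^2 := by
      rw [IndepFun.variance_sum (fun i _ => hℒ2 i) hpair]
      calc ∑ i ∈ Finset.range m, variance (S.ε2 j i) Pr
          ≤ ∑ _i ∈ Finset.range m, S.bound^2 := Finset.sum_le_sum fun i _ => hvar_le i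
        _ = (m:ℝ) * S.bound^2 := by simp [mul_comm]
    have hmean : Pr[∑ i ∈ Finset.range m, S.ε2 j i] = 0 := by
      have : ∀ ω, (∑ i ∈ Finset.range m, S.ε2 j i) ω = ∑ i ∈ Finset.range m, S.ε2 j i ω :=
        fun ω => Finset.sum_apply ω _ _
      rw [integral_congr_ae (Filter.Eventually.of_forall this),
        integral_finset_sum _ (fun i _ => (hℒ2 i).integrable one_le_two)]
      simp [S.ε2_mean]
    have hcpos : 0 < δ * n := mul_pos hδpos hn0
    have hcheb := meas_ge_le_variance_div_sq (μ := Pr) hSm2 hcpos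
    have hsets : {ω | δ ≤ |(n:ℝ)⁻¹ * ∑ i ∈ Finset.range m, S.ε2 j i ω|}
        = {ω | δ * n ≤ |(∑ i ∈ Finset.range m, S.ε2 j i) ω
            - Pr[∑ i ∈ Finset.range m, S.ε2 j i]|} := by
      ext ω
      have hmean' : ∫ x, ∑ c ∈ Finset.range m, S.ε2 j c x ∂Pr = 0 := by
        simpa [Finset.sum_apply] using hmean
      simp only [Set.mem_setOf_eq, Finset.sum_apply]
      rw [hmean', sub_zero, abs_mul, abs_inv, Nat.abs_cast, inv_mul_eq_div,
        le_div_iff₀ hn0]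
    rw [hsets]
    refine hcheb.trans (ENNReal.ofReal_le_ofReal ?_)
    rw [div_le_div_iff₀ (by positivity) (by positivity)]
    have h5 : variance (∑ i ∈ Finset.range m, S.ε2 j i) Pr ≤ (n:ℝ) * S.bound^2 := by
      refine hvarSm.trans ?_
      have : (m:ℝ) ≤ (n:ℝ) := by exact_mod_cast hmn
      nlinarith [sq_nonneg S.bound]
    nlinarith [variance_nonneg (∑ i ∈ Finset.range m, S.ε2 j i) Pr, sq_nonneg S.bound,
      mul_pos (mul_pos hδpos hδpos) hn0]
  -- squeeze
  have hupper_tendsto : Tendsto (fun n : ℕ =>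
      (J2 : ℝ≥0∞) * ENNReal.ofReal (S.bound^2 / (δ^2 * n))) atTop (𝓝 0) := by
    have hreal : Tendsto (fun n : ℕ => S.bound^2 / (δ^2 * n)) atTop (𝓝 0) := by
      have heq : (fun n : ℕ => S.bound^2 / (δ^2 * n))
          = fun n : ℕ => (S.bound^2 / δ^2) / n := by
        funext n; rw [div_div]
      rw [heq]
      exact tendsto_const_div_atTop_nhds_zero_nat _
    have h1 : Tendsto (fun n : ℕ => ENNReal.ofReal (S.bound^2 / (δ^2 * n))) atTop (𝓝 0) := by
      have := ENNReal.tendsto_ofReal hreal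
      simpa using this
    have h2 := ENNReal.Tendsto.const_mul h1 (Or.inr (by simp : (J2 : ℝ≥0∞) ≠ ⊤))
    simpa using h2
  refine tendsto_of_tendsto_of_tendsto_of_le_of_le' tendsto_const_nhds hupper_tendsto
    (Filter.Eventually.of_forall fun n => zero_le) ?_
  filter_upwards [eventually_ge_atTop 1] with n hn
  calc Pr {ω | ε ≤ dist (sSup ((fun β =>
        ‖(n : ℝ)⁻¹ • ∑ j, ∑ i ∈ Finset.range (S.n2 n j),
          (deriv S.h ⟪β, S.X2v n j ω⟫ * S.ε2n n j i ω) • S.X2v n j ω‖) '' S.B)) 0}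
      ≤ Pr (⋃ j : Fin J2, {ω | δ ≤ T n j ω}) := measure_mono (hincl n)
    _ ≤ ∑ j : Fin J2, Pr {ω | δ ≤ T n j ω} := measure_iUnion_fintype_le _ _
    _ ≤ ∑ _j : Fin J2, ENNReal.ofReal (S.bound^2 / (δ^2 * n)) :=
        Finset.sum_le_sum fun j _ => tail j n hn
    _ = (J2 : ℝ≥0∞) * ENNReal.ofReal (S.bound^2 / (δ^2 * n)) := by
        rw [Finset.sum_const, Finset.card_univ, Fintype.card_fin, nsmul_eq_mul]


end
end
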